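/- Let q be a positive integer and m an integer, and let η_q(m) denote the number of residues y modulo q with y² ≡ m (mod q). Then η_q(m) ≤ gcd(q,2) · 2^{ω(q)} · √{q,m}, where ω(q) is the number of distinct prime factors of q and {q,m} is the largest perfect square dividing gcd(q,m) (interpreting gcd(q,0) = q). -/

import Mathlib

/-- `sqPart d` is the largest perfect square dividing `d`:
∏_{p^j ∥ d} p^{2⌊j/2⌋}. -/
def sqPart (d : ℕ) : ℕ := ∏ p ∈ d.primeFactors, p ^ (2 * (d.factorization p / 2))

def root (d : ℕ) : ℕ := ∏ p ∈ d.primeFactors, p ^ (d.factorization p / 2)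

lemma sqPart_eq_root_sq (d : ℕ) : sqPart d = root d ^ 2 := by
  rw [sqPart, root, ← Finset.prod_pow]
  refine Finset.prod_congr rfl fun p _ => ?_
  rw [← pow_mul, mul_comm (d.factorization p / 2) 2]

lemma sqrt_sqPart (d : ℕ) : Nat.sqrt (sqPart d) = root d := by
  rw [sqPart_eq_root_sq, pow_two, Nat.sqrt_eq]

lemma factorization_eq_zero_of_not_mem {y p : ℕ} (h : p ∉ y.primeFactors) :
    y.factorization p = 0 := by
  rwa [← Nat.support_factorization, Finsupp.notMem_support_iff] at h

lemma root_prime_pow {p : ℕ} (hp : p.Prime) (t : ℕ) : root (p ^ t) = p ^ (t / 2) := by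
  rcases Nat.eq_zero_or_pos t with rfl | ht
  · simp [root]
  · rw [root, Nat.primeFactors_prime_pow ht.ne' hp, hp.factorization_pow]
    simp

lemma root_mul_coprime {x y : ℕ} (hx : x ≠ 0) (hy : y ≠ 0) (h : x.Coprime y) :
    root (x * y) = root x * root y := by
  have hdisj := Nat.Coprime.disjoint_primeFactors h
  rw [root, root, root, Nat.primeFactors_mul hx hy, Finset.prod_union hdisj]
  congr 1
  · refine Finset.prod_congr rfl fun p hp => ?_
    rw [Nat.factorization_mul hx hy, Finsupp.add_apply,
      factorization_eq_zero_of_not_mem (Finset.disjoint_left.mp hdisj hp), add_zero]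
  · refine Finset.prod_congr rfl fun p hp => ?_
    rw [Nat.factorization_mul hx hy, Finsupp.add_apply,
      factorization_eq_zero_of_not_mem (Finset.disjoint_right.mp hdisj hp), zero_add]

lemma gcd_mul_coprime {a b : ℕ} (h : a.Coprime b) (n : ℕ) :
    Nat.gcd (a * b) n = Nat.gcd a n * Nat.gcd b n := by
  apply Nat.dvd_antisymm
  · have h1 : Nat.gcd (a*b) n ∣ Nat.gcd (Nat.gcd (a*b) n) a * Nat.gcd (Nat.gcd (a*b) n) b :=
      Nat.dvd_gcd_mul_gcd_iff_dvd_mul.mpr (Nat.gcd_dvd_left _ _)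
    exact h1.trans (mul_dvd_mul
      (Nat.dvd_gcd ((Nat.gcd_dvd_right _ _)) ((Nat.gcd_dvd_left _ _).trans (Nat.gcd_dvd_right _ _)))
      (Nat.dvd_gcd ((Nat.gcd_dvd_right _ _)) ((Nat.gcd_dvd_left _ _).trans (Nat.gcd_dvd_right _ _))))
  · refine Nat.dvd_gcd (mul_dvd_mul (Nat.gcd_dvd_left _ _) (Nat.gcd_dvd_left _ _)) ?_
    refine Nat.Coprime.mul_dvd_of_dvd_of_dvd ?_ (Nat.gcd_dvd_right _ _) (Nat.gcd_dvd_right _ _)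
    exact Nat.Coprime.coprime_dvd_right (Nat.gcd_dvd_left _ _)
      (Nat.Coprime.coprime_dvd_left (Nat.gcd_dvd_left _ _) h)

def F (n : ℕ) (m : ℤ) : ℕ :=
  ((Finset.range n).filter (fun y : ℕ => ((y : ℤ) ^ 2) % (n : ℤ) = m % (n : ℤ))).card

lemma cond_iff_zmod (n : ℕ) (m : ℤ) (y : ℕ) :
    (((y : ℤ) ^ 2) % (n : ℤ) = m % (n : ℤ)) ↔ ((y : ZMod n) ^ 2 = (m : ZMod n)) := by
  have : ((y : ℤ)^2 % (n:ℤ) = m % (n:ℤ)) ↔ Int.ModEq (n:ℤ) ((y:ℤ)^2) m := Iff.rfl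
  rw [this, ← ZMod.intCast_eq_intCast_iff]
  push_cast
  rfl

lemma F_eq_card_zmod (n : ℕ) [NeZero n] (m : ℤ) :
    F n m = (Finset.univ.filter (fun x : ZMod n => x ^ 2 = (m : ZMod n))).card := by
  show ((Finset.range n).filter _).card = _
  refine Finset.card_bij (fun y _ => (y : ZMod n)) ?_ ?_ ?_
  · intro y hy
    simp only [Finset.mem_filter, Finset.mem_range] at hy ⊢
    exact ⟨Finset.mem_univ _, (cond_iff_zmod n m y).mp hy.2⟩
  · intro y1 h1 y2 h2 he
    simp only [Finset.mem_filter, Finset.mem_range] at h1 h2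
    have h3 := congrArg ZMod.val he
    rwa [ZMod.val_cast_of_lt h1.1, ZMod.val_cast_of_lt h2.1] at h3
  · intro x hx
    simp only [Finset.mem_filter, Finset.mem_univ, true_and] at hx
    have hxx : ((x.val : ℕ) : ZMod n) = x := ZMod.natCast_rightInverse x
    refine ⟨x.val, ?_, hxx⟩
    simp only [Finset.mem_filter, Finset.mem_range]
    refine ⟨ZMod.val_lt x, ?_⟩
    rw [cond_iff_zmod, hxx]
    exact hx

lemma F_mul {a b : ℕ} (ha : 0 < a) (hb : 0 < b) (h : a.Coprime b) (m : ℤ) :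
    F (a * b) m = F a m * F b m := by
  haveI : NeZero a := ⟨ha.ne'⟩
  haveI : NeZero b := ⟨hb.ne'⟩
  haveI : NeZero (a * b) := ⟨(Nat.mul_pos ha hb).ne'⟩
  rw [F_eq_card_zmod (a * b), F_eq_card_zmod a, F_eq_card_zmod b]
  rw [← Fintype.card_subtype, ← Fintype.card_subtype, ← Fintype.card_subtype,
    ← Fintype.card_prod]
  apply Fintype.card_congr
  let e := ZMod.chineseRemainder h
  have hm : e ((m : ℤ) : ZMod (a * b)) = ((m : ZMod a), (m : ZMod b)) := by
    rw [map_intCast]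
    ext <;> simp
  refine Equiv.trans (Equiv.subtypeEquiv e.toEquiv
      (q := fun y : ZMod a × ZMod b => y.1 ^ 2 = (m : ZMod a) ∧ y.2 ^ 2 = (m : ZMod b))
      (fun x => ?_))
    (Equiv.subtypeProdEquivProd (p := fun u : ZMod a => u ^ 2 = (m : ZMod a))
      (q := fun v : ZMod b => v ^ 2 = (m : ZMod b)))
  show x ^ 2 = ((m : ℤ) : ZMod (a*b)) ↔ (e x).1 ^ 2 = (m : ZMod a) ∧ (e x).2 ^ 2 = (m : ZMod b)
  constructor
  · intro hx
    have : e (x ^ 2) = e ((m : ℤ) : ZMod (a*b)) := by rw [hx]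
    rw [map_pow, hm, Prod.ext_iff] at this
    exact this
  · intro ⟨h1, h2⟩
    apply e.injective
    rw [map_pow, hm]
    exact Prod.ext h1 h2

lemma period_iter {n : ℕ} {P : ℕ → Prop} (hper : ∀ y, P (y + n) ↔ P y) :
    ∀ (c x : ℕ), P (x + c * n) ↔ P x := by
  intro c
  induction c with
  | zero => simp
  | succ c ih =>
    intro x
    have : x + (c + 1) * n = (x + c * n) + n := by ring
    rw [this, hper, ih]

lemma card_filter_range_mul (c n : ℕ) (P : ℕ → Prop) [DecidablePred P]
    (hper : ∀ y, P (y + n) ↔ P y) :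
    ((Finset.range (c * n)).filter P).card = c * ((Finset.range n).filter P).card := by
  induction c with
  | zero => simp
  | succ c ih =>
    have h1 : (c + 1) * n = c * n + n := by ring
    rw [h1, Finset.range_add, Finset.filter_union, Finset.card_union_of_disjoint, ih]
    · have h2 : (((Finset.range n).map (addLeftEmbedding (c * n))).filter P).card
          = ((Finset.range n).filter P).card := by
        rw [Finset.filter_map, Finset.card_map]
        congr 1
        apply Finset.filter_congr
        intro x _
        show P (c * n + x) ↔ P x
        rw [add_comm]
        exact period_iter hper c x
      rw [h2]
      ring
    · refine Finset.disjoint_left.mpr ?_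
      intro x hx hx'
      simp only [Finset.mem_filter, Finset.mem_range, Finset.mem_map,
        addLeftEmbedding_apply] at hx hx'
      obtain ⟨⟨y, _, hy⟩, _⟩ := hx'
      omega

def vmin (p k : ℕ) (m : ℤ) : ℕ := if m = 0 then k else min k (m.natAbs.factorization p)

lemma gcd_pow_eq {p : ℕ} (hp : p.Prime) (k : ℕ) (m : ℤ) :
    Nat.gcd (p ^ k) m.natAbs = p ^ vmin p k m := by
  rcases eq_or_ne m 0 with rfl | hm
  · simp [vmin]
  · have hn : m.natAbs ≠ 0 := Int.natAbs_ne_zero.mpr hm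
    rw [vmin, if_neg hm]
    obtain ⟨j, hj, hje⟩ := (Nat.dvd_prime_pow hp).mp (Nat.gcd_dvd_left (p ^ k) m.natAbs)
    rw [hje]
    congr 1
    have hjv : j ≤ m.natAbs.factorization p :=
      (hp.pow_dvd_iff_le_factorization hn).mp (hje ▸ Nat.gcd_dvd_right (p ^ k) m.natAbs)
    have hmin : p ^ min k (m.natAbs.factorization p) ∣ Nat.gcd (p ^ k) m.natAbs :=
      Nat.dvd_gcd (pow_dvd_pow p (min_le_left _ _))
        ((hp.pow_dvd_iff_le_factorization hn).mpr (min_le_right _ _))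
    rw [hje] at hmin
    have := (Nat.pow_dvd_pow_iff_le_right hp.one_lt).mp hmin
    omega

lemma mem_sol {n : ℕ} {m : ℤ} {y : ℕ} :
    y ∈ (Finset.range n).filter (fun y : ℕ => ((y : ℤ) ^ 2) % (n : ℤ) = m % (n : ℤ)) ↔
      y < n ∧ (y : ℤ) ^ 2 ≡ m [ZMOD (n : ℤ)] := by
  simp only [Finset.mem_filter, Finset.mem_range]
  exact Iff.rfl

lemma not_dvd_sol {p k : ℕ} (hp : p.Prime) (hk : 1 ≤ k) {m : ℤ} (hm : ¬ (p : ℤ) ∣ m)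
    {y : ℕ} (hy : (y : ℤ) ^ 2 ≡ m [ZMOD ((p ^ k : ℕ) : ℤ)]) : ¬ (p : ℤ) ∣ (y : ℤ) := by
  intro hpy
  apply hm
  have hdvd : ((p : ℤ)) ∣ ((p ^ k : ℕ) : ℤ) := by
    push_cast
    exact dvd_pow_self _ (by omega)
  have h1 : (y : ℤ) ^ 2 ≡ m [ZMOD (p : ℤ)] := hy.of_dvd hdvd
  have h2 : (p : ℤ) ∣ m - (y : ℤ) ^ 2 := h1.dvd
  have h3 : (p : ℤ) ∣ (y : ℤ) ^ 2 := hpy.trans (dvd_pow_self _ (by norm_num) : (y:ℤ) ∣ _)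
  have h4 := dvd_add h2 h3
  simpa using h4

lemma PP_unit_odd {p k : ℕ} (hp : p.Prime) (hp2 : p ≠ 2) (hk : 1 ≤ k) {m : ℤ}
    (hm : ¬ (p : ℤ) ∣ m) : F (p ^ k) m ≤ 2 := by
  classical
  have hp' : Prime ((p : ℤ)) := Nat.prime_iff_prime_int.mp hp
  have hpk : 0 < p ^ k := pow_pos hp.pos k
  rw [F]
  set s := (Finset.range (p ^ k)).filter
    (fun y : ℕ => ((y : ℤ) ^ 2) % ((p ^ k : ℕ) : ℤ) = m % ((p ^ k : ℕ) : ℤ)) with hs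
  rcases s.eq_empty_or_nonempty with he | ⟨y₀, hy₀⟩
  · rw [he]; simp
  · have hsub : s ⊆ {y₀, p ^ k - y₀} := by
      intro y hy
      rw [hs, mem_sol] at hy hy₀
      obtain ⟨hylt, hymod⟩ := hy
      obtain ⟨hy₀lt, hy₀mod⟩ := hy₀
      have hpy : ¬ (p : ℤ) ∣ (y : ℤ) := not_dvd_sol hp hk hm hymod
      have hpy₀ : ¬ (p : ℤ) ∣ (y₀ : ℤ) := not_dvd_sol hp hk hm hy₀mod
      have hdvd : ((p ^ k : ℕ) : ℤ) ∣ ((y : ℤ) - y₀) * ((y : ℤ) + y₀) := by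
        have h1 : ((y₀ : ℤ) ^ 2) ≡ (y : ℤ) ^ 2 [ZMOD ((p ^ k : ℕ) : ℤ)] :=
          hy₀mod.trans hymod.symm
        have h2 := h1.dvd
        have h3 : (y : ℤ) ^ 2 - (y₀ : ℤ) ^ 2 = ((y : ℤ) - y₀) * ((y : ℤ) + y₀) := by ring
        rwa [h3] at h2
      rw [show ((p ^ k : ℕ) : ℤ) = (p : ℤ) ^ k by push_cast; ring] at hdvd
      by_cases hd : (p : ℤ) ∣ ((y : ℤ) - y₀)
      · have hnd : ¬ (p : ℤ) ∣ ((y : ℤ) + y₀) := by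
          intro hd2
          have h2y : (p : ℤ) ∣ 2 * (y : ℤ) := by
            have : 2 * (y : ℤ) = ((y : ℤ) - y₀) + ((y : ℤ) + y₀) := by ring
            rw [this]; exact dvd_add hd hd2
          rcases hp'.dvd_mul.mp h2y with h | h
          · have h5 : p ∣ 2 := by exact_mod_cast h
            exact hp2 ((Nat.prime_dvd_prime_iff_eq hp Nat.prime_two).mp h5)
          · exact hpy h
        have hk1 : (p : ℤ) ^ k ∣ ((y : ℤ) - y₀) :=
          hp'.pow_dvd_of_dvd_mul_right k hnd hdvd
        have : y₀ ≡ y [MOD p ^ k] := by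
          rw [Nat.modEq_iff_dvd]
          exact_mod_cast hk1
        have : y₀ % p ^ k = y % p ^ k := this
        rw [Nat.mod_eq_of_lt hy₀lt, Nat.mod_eq_of_lt hylt] at this
        simp [← this]
      · have hk1 : (p : ℤ) ^ k ∣ ((y : ℤ) + y₀) :=
          hp'.pow_dvd_of_dvd_mul_left k hd hdvd
        have hnat : p ^ k ∣ y + y₀ := by
          have : ((y + y₀ : ℕ) : ℤ) = (y : ℤ) + y₀ := by push_cast; ring
          rw [← Int.natCast_dvd_natCast]
          push_cast
          exact_mod_cast hk1
        obtain ⟨c, hc⟩ := hnat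
        have hclt : c < 2 := by
          by_contra hcge
          push_neg at hcge
          have : 2 * p ^ k ≤ p ^ k * c := by
            calc 2 * p ^ k = p ^ k * 2 := by ring
            _ ≤ p ^ k * c := Nat.mul_le_mul_left _ hcge
          omega
        interval_cases c
        · have hy0 : y = 0 := by omega
          exfalso; apply hpy; rw [hy0]; simp
        · have : y = p ^ k - y₀ := by omega
          simp [this]
    calc s.card ≤ ({y₀, p ^ k - y₀} : Finset ℕ).card := Finset.card_le_card hsub
    _ ≤ 2 := Finset.card_insert_le _ _ |>.trans (by simp)

lemma split_lt_two_mul {y h e : ℕ} (hy : y < 2 * h) (he : y % h = e) :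
    y = e ∨ y = e + h := by
  have h1 := Nat.div_add_mod y h
  have h2 : y / h < 2 := Nat.div_lt_of_lt_mul (by omega)
  have h3 : y / h = 0 ∨ y / h = 1 := by
    rcases Nat.eq_zero_or_pos (y / h) with h4 | h4
    · exact Or.inl h4
    · right; omega
  rcases h3 with h3 | h3 <;> rw [h3] at h1 <;> simp at h1 <;> omega

lemma mod_eq_of_dvd_add {x r h : ℕ} (hx : x < h) (hr : r < h) (hr1 : 1 ≤ r)
    (hd : h ∣ x + r) : x = h - r := by
  obtain ⟨c, hc⟩ := hd
  have : c < 2 := by nlinarith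
  interval_cases c <;> omega

lemma PP_unit_two {k : ℕ} (hk : 2 ≤ k) {m : ℤ} (hm : ¬ (2 : ℤ) ∣ m) :
    F (2 ^ k) m ≤ 4 := by
  classical
  have hp' : Prime ((2 : ℤ)) := Int.prime_two
  have hpk : 0 < 2 ^ k := pow_pos (by norm_num) k
  set h : ℕ := 2 ^ (k - 1) with hh
  have hhpos : 0 < h := pow_pos (by norm_num) _
  have h2h : 2 ^ k = 2 * h := by
    rw [hh, ← pow_succ']
    congr 1
    omega
  rw [F]
  set s := (Finset.range (2 ^ k)).filter
    (fun y : ℕ => ((y : ℤ) ^ 2) % ((2 ^ k : ℕ) : ℤ) = m % ((2 ^ k : ℕ) : ℤ)) with hs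
  rcases s.eq_empty_or_nonempty with he | ⟨y₀, hy₀⟩
  · rw [he]; simp
  · rw [hs, mem_sol] at hy₀
    obtain ⟨hy₀lt, hy₀mod⟩ := hy₀
    have hodd : ∀ y : ℕ, (y : ℤ) ^ 2 ≡ m [ZMOD ((2 ^ k : ℕ) : ℤ)] → y % 2 = 1 := by
      intro y hy
      have := not_dvd_sol (p := 2) (k := k) Nat.prime_two (by omega) hm hy
      have h2 : ¬ (2 : ℕ) ∣ y := by
        intro hc; apply this; exact_mod_cast Int.natCast_dvd_natCast.mpr hc
      omega
    have hy₀odd : y₀ % 2 = 1 := hodd y₀ hy₀mod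
    set r : ℕ := y₀ % h with hr
    have hrlt : r < h := Nat.mod_lt _ hhpos
    have hrodd : r % 2 = 1 := by
      rw [hr, Nat.mod_mod_of_dvd y₀ (dvd_pow_self 2 (by omega) : (2:ℕ) ∣ h)]
      exact hy₀odd
    have hsub : s ⊆ {r, r + h, h - r, h - r + h} := by
      intro y hy
      rw [hs, mem_sol] at hy
      obtain ⟨hylt, hymod⟩ := hy
      have hyodd : y % 2 = 1 := hodd y hymod
      have hdvd : ((2 : ℤ)) ^ k ∣ ((y : ℤ) - y₀) * ((y : ℤ) + y₀) := by
        have h1 : ((y₀ : ℤ) ^ 2) ≡ (y : ℤ) ^ 2 [ZMOD ((2 ^ k : ℕ) : ℤ)] :=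
          hy₀mod.trans hymod.symm
        have h2 := h1.dvd
        have h3 : (y : ℤ) ^ 2 - (y₀ : ℤ) ^ 2 = ((y : ℤ) - y₀) * ((y : ℤ) + y₀) := by ring
        rw [h3] at h2
        exact_mod_cast h2
      obtain ⟨a, ha⟩ : (2 : ℤ) ∣ ((y : ℤ) - y₀) := by omega
      obtain ⟨b, hb⟩ : (2 : ℤ) ∣ ((y : ℤ) + y₀) := by omega
      have hab : (2 : ℤ) ^ (k - 2) ∣ a * b := by
        have h4 : (4 : ℤ) * (2 ^ (k - 2)) = 2 ^ k := by
          have : (2 : ℤ) ^ k = 2 ^ (k - 2) * 2 ^ 2 := by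
            rw [← pow_add]; congr 1; omega
          rw [this]; ring
        have h5 : (4 : ℤ) * 2 ^ (k - 2) ∣ 4 * (a * b) := by
          rw [h4]
          have : ((y : ℤ) - y₀) * ((y : ℤ) + y₀) = 4 * (a * b) := by
            rw [ha, hb]; ring
          rwa [this] at hdvd
        exact (mul_dvd_mul_iff_left (by norm_num : (4:ℤ) ≠ 0)).mp h5
      have haborbodd : ¬ (2:ℤ) ∣ a ∨ ¬ (2:ℤ) ∣ b := by
        by_contra hc
        push_neg at hc
        obtain ⟨⟨a', ha'⟩, ⟨b', hb'⟩⟩ := hc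
        omega
      have hkey : (h : ℤ) ∣ ((y : ℤ) - y₀) ∨ (h : ℤ) ∣ ((y : ℤ) + y₀) := by
        have hcast : (h : ℤ) = 2 ^ (k - 1) := by rw [hh]; push_cast; ring
        have hsplit : (2:ℤ) ^ (k-1) = 2 * 2 ^ (k-2) := by
          rw [← pow_succ']; congr 1; omega
        rcases haborbodd with hna | hnb
        · right
          have : (2:ℤ) ^ (k-2) ∣ b := hp'.pow_dvd_of_dvd_mul_left _ hna hab
          rw [hcast, hsplit, hb]
          exact mul_dvd_mul_left 2 this
        · left
          have : (2:ℤ) ^ (k-2) ∣ a := hp'.pow_dvd_of_dvd_mul_right _ hnb hab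
          rw [hcast, hsplit, ha]
          exact mul_dvd_mul_left 2 this
      have hylt2 : y < 2 * h := by omega
      rcases hkey with hcase | hcase
      · -- y ≡ y₀ mod h
        have hmodeq : y₀ ≡ y [MOD h] := by
          rw [Nat.modEq_iff_dvd]
          exact_mod_cast hcase
        have hmr : y % h = r := hmodeq.symm
        rcases split_lt_two_mul hylt2 hmr with h6 | h6 <;> simp [h6]
      · -- h ∣ y + y₀
        have hnat : h ∣ y + y₀ := by
          rw [← Int.natCast_dvd_natCast]
          push_cast
          exact_mod_cast hcase
        have h7 : (y + y₀) % h = 0 := Nat.mod_eq_zero_of_dvd hnat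
        have h8 : (y % h + r) % h = 0 := by rw [hr, ← Nat.add_mod]; exact h7
        have h9 : h ∣ y % h + r := Nat.dvd_of_mod_eq_zero h8
        have hmr : y % h = h - r :=
          mod_eq_of_dvd_add (Nat.mod_lt _ hhpos) hrlt (by omega) h9
        rcases split_lt_two_mul hylt2 hmr with h6 | h6 <;> simp [h6]
    calc s.card ≤ ({r, r + h, h - r, h - r + h} : Finset ℕ).card :=
          Finset.card_le_card hsub
    _ ≤ 4 := by
        apply le_trans (Finset.card_insert_le _ _)
        have h1 : ({r + h, h - r, h - r + h} : Finset ℕ).card ≤ 3 := by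
          apply le_trans (Finset.card_insert_le _ _)
          have h2 : ({h - r, h - r + h} : Finset ℕ).card ≤ 2 := by
            apply le_trans (Finset.card_insert_le _ _)
            simp
          omega
        omega

lemma sol_p_dvd {p k : ℕ} (hp : p.Prime) (hk : 1 ≤ k) {m : ℤ} (hm : (p : ℤ) ∣ m)
    {y : ℕ} (hy : (y : ℤ) ^ 2 ≡ m [ZMOD ((p ^ k : ℕ) : ℤ)]) : p ∣ y := by
  have hp' : Prime ((p : ℤ)) := Nat.prime_iff_prime_int.mp hp
  have hdvd : ((p : ℤ)) ∣ ((p ^ k : ℕ) : ℤ) := by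
    push_cast; exact dvd_pow_self _ (by omega)
  have h1 := hy.of_dvd hdvd
  have h2 : (p : ℤ) ∣ (y : ℤ) ^ 2 := by
    have h3 := dvd_sub hm h1.dvd
    have h4 : m - (m - (y : ℤ) ^ 2) = (y : ℤ) ^ 2 := by ring
    rwa [h4] at h3
  exact_mod_cast hp'.dvd_of_dvd_pow h2

lemma PP_one {p : ℕ} (hp : p.Prime) {m : ℤ} (hm : (p : ℤ) ∣ m) : F (p ^ 1) m ≤ 1 := by
  rw [F]
  have hsub : (Finset.range (p ^ 1)).filter
      (fun y : ℕ => ((y : ℤ) ^ 2) % ((p ^ 1 : ℕ) : ℤ) = m % ((p ^ 1 : ℕ) : ℤ)) ⊆ {0} := by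
    intro y hy
    rw [mem_sol] at hy
    obtain ⟨hylt, hymod⟩ := hy
    have hpy : p ∣ y := sol_p_dvd hp le_rfl hm hymod
    rw [pow_one] at hylt
    obtain ⟨c, hc⟩ := hpy
    have : c = 0 := by nlinarith [hp.pos]
    simp [hc, this]
  exact (Finset.card_le_card hsub).trans (by simp)

lemma PP_empty {p k : ℕ} (hp : p.Prime) (hk : 2 ≤ k) {m : ℤ} (hm : (p : ℤ) ∣ m)
    (hm2 : ¬ ((p : ℤ) ^ 2 ∣ m)) : F (p ^ k) m = 0 := by
  rw [F, Finset.card_eq_zero]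
  apply Finset.eq_empty_of_forall_notMem
  intro y hy
  rw [mem_sol] at hy
  obtain ⟨hylt, hymod⟩ := hy
  apply hm2
  have hpy : p ∣ y := sol_p_dvd hp (by omega) hm hymod
  have hpy2 : (p : ℤ) ^ 2 ∣ (y : ℤ) ^ 2 := by
    obtain ⟨c, hc⟩ := hpy
    refine ⟨(c : ℤ) ^ 2, ?_⟩
    rw [hc]; push_cast; ring
  have hdd : (p : ℤ) ^ 2 ∣ m - (y : ℤ) ^ 2 := by
    have h1 : ((p ^ k : ℕ) : ℤ) ∣ m - (y : ℤ) ^ 2 := hymod.dvd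
    have h2 : ((p : ℤ)) ^ 2 ∣ ((p ^ k : ℕ) : ℤ) := by
      push_cast; exact pow_dvd_pow _ hk
    exact h2.trans h1
  have := dvd_add hdd hpy2
  simpa using this

lemma PP_rec {p k : ℕ} (hp : p.Prime) (hk : 2 ≤ k) {m : ℤ} (hm2 : (p : ℤ) ^ 2 ∣ m) :
    F (p ^ k) m ≤ p * F (p ^ (k - 2)) (m / (p : ℤ) ^ 2) := by
  classical
  have hp0 : (0 : ℕ) < p := hp.pos
  have hpZ : ((p : ℤ)) ≠ 0 := by exact_mod_cast hp0.ne'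
  set m' := m / (p : ℤ) ^ 2 with hm'def
  have hmm : m = (p : ℤ) ^ 2 * m' := (Int.mul_ediv_cancel' hm2).symm
  have hpm : (p : ℤ) ∣ m := (dvd_pow_self (p:ℤ) two_ne_zero).trans hm2
  rw [F, F]
  set t := (Finset.range (p ^ (k - 1))).filter
    (fun z : ℕ => ((z : ℤ) ^ 2) % ((p ^ (k - 2) : ℕ) : ℤ) = m' % ((p ^ (k - 2) : ℕ) : ℤ))
    with ht
  have hstep : ((Finset.range (p ^ k)).filter
      (fun y : ℕ => ((y : ℤ) ^ 2) % ((p ^ k : ℕ) : ℤ) = m % ((p ^ k : ℕ) : ℤ))).card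
      ≤ t.card := by
    apply Finset.card_le_card_of_injOn (fun y => y / p)
    · intro y hy
      rw [Finset.mem_coe, mem_sol] at hy
      obtain ⟨hylt, hymod⟩ := hy
      have hpy : p ∣ y := sol_p_dvd hp (by omega) hpm hymod
      obtain ⟨z, hz⟩ := hpy
      have hzdiv : y / p = z := by rw [hz, Nat.mul_div_cancel_left z hp0]
      simp only [ht, Finset.mem_coe, Finset.mem_filter, Finset.mem_range, hzdiv]
      constructor
      · by_contra hc
        push_neg at hc
        have hmul : p * p ^ (k - 1) ≤ p * z := Nat.mul_le_mul_left _ hc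
        rw [← pow_succ'] at hmul
        have hkk : k - 1 + 1 = k := by omega
        rw [hkk] at hmul
        omega
      · have hdd : ((p ^ k : ℕ) : ℤ) ∣ m - (y : ℤ) ^ 2 := hymod.dvd
        have heq : m - (y : ℤ) ^ 2 = (p : ℤ) ^ 2 * (m' - (z : ℤ) ^ 2) := by
          rw [hmm, hz]; push_cast; ring
        have hcast : ((p ^ k : ℕ) : ℤ) = (p : ℤ) ^ 2 * (p : ℤ) ^ (k - 2) := by
          push_cast
          rw [← pow_add]
          congr 1
          omega
        rw [heq, hcast] at hdd
        have h5 : (p : ℤ) ^ (k - 2) ∣ m' - (z : ℤ) ^ 2 :=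
          (mul_dvd_mul_iff_left (pow_ne_zero 2 hpZ)).mp hdd
        have h6 : ((p ^ (k - 2) : ℕ) : ℤ) ∣ m' - (z : ℤ) ^ 2 := by push_cast; exact h5
        exact Int.modEq_of_dvd h6
    · intro y1 h1 y2 h2 he
      simp only [Finset.coe_filter, Set.mem_setOf_eq, Finset.mem_range] at h1 h2
      have hpy1 : p ∣ y1 := sol_p_dvd hp (by omega) hpm h1.2
      have hpy2 : p ∣ y2 := sol_p_dvd hp (by omega) hpm h2.2
      have e1 : y1 = p * (y1 / p) := (Nat.mul_div_cancel' hpy1).symm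
      have e2 : y2 = p * (y2 / p) := (Nat.mul_div_cancel' hpy2).symm
      rw [e1, e2]
      simp only at he
      rw [he]
  have hcount : t.card = p * F (p ^ (k - 2)) m' := by
    rw [ht, F]
    have hrange : p ^ (k - 1) = p * p ^ (k - 2) := by
      rw [← pow_succ']
      congr 1
      omega
    rw [hrange]
    apply card_filter_range_mul
    intro z
    set N : ℕ := p ^ (k - 2)
    have hmod : (((z + N : ℕ) : ℤ)) ^ 2 ≡ ((z : ℕ) : ℤ) ^ 2 [ZMOD ((N : ℕ) : ℤ)] := by
      apply Int.modEq_of_dvd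
      have : ((z : ℕ) : ℤ) ^ 2 - (((z + N : ℕ) : ℤ)) ^ 2 = (N : ℤ) * (-(2 * z) - N) := by
        push_cast
        ring
      rw [this]
      exact Dvd.intro _ rfl
    constructor
    · intro hzN
      exact (hmod.symm.trans hzN)
    · intro hz
      exact (hmod.trans hz)
  calc _ ≤ t.card := hstep
  _ = p * F (p ^ (k - 2)) m' := hcount

lemma vmin_rec {p k : ℕ} (hp : p.Prime) (hk : 2 ≤ k) {m : ℤ} (hm2 : (p : ℤ) ^ 2 ∣ m) :
    vmin p k m / 2 = vmin p (k - 2) (m / (p : ℤ) ^ 2) / 2 + 1 := by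
  have hp0 : 0 < p := hp.pos
  rcases eq_or_ne m 0 with rfl | hm0
  · rw [vmin, vmin]
    simp only [Int.zero_ediv, if_pos rfl, if_true]
    omega
  · have hmm : m = (p : ℤ) ^ 2 * (m / (p : ℤ) ^ 2) := (Int.mul_ediv_cancel' hm2).symm
    have hm'0 : m / (p : ℤ) ^ 2 ≠ 0 := by
      intro hc
      rw [hc, mul_zero] at hmm
      exact hm0 hmm
    have hnat : m.natAbs = p ^ 2 * (m / (p : ℤ) ^ 2).natAbs := by
      conv_lhs => rw [hmm]
      rw [Int.natAbs_mul]
      simp [Int.natAbs_pow]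
    have hfac : m.natAbs.factorization p = 2 + (m / (p : ℤ) ^ 2).natAbs.factorization p := by
      rw [hnat, Nat.factorization_mul (pow_ne_zero 2 hp0.ne') (Int.natAbs_ne_zero.mpr hm'0)]
      rw [hp.factorization_pow]
      simp
    rw [vmin, vmin, if_neg hm0, if_neg hm'0, hfac]
    omega

lemma gcd_pow_two {p k : ℕ} (hp : p.Prime) (hk : 1 ≤ k) :
    Nat.gcd (p ^ k) 2 = Nat.gcd p 2 := by
  by_cases h2 : 2 ∣ p
  · have hd : 2 ∣ p ^ k := h2.trans (dvd_pow_self p (by omega))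
    rw [Nat.gcd_comm, Nat.gcd_eq_left hd, Nat.gcd_comm, Nat.gcd_eq_left h2]
  · have hodd : ¬ 2 ∣ p ^ k := fun hc => h2 (Nat.Prime.dvd_of_dvd_pow Nat.prime_two hc)
    have c1 : Nat.Coprime 2 (p ^ k) := (Nat.prime_two.coprime_iff_not_dvd).mpr hodd
    have c2 : Nat.Coprime 2 p := (Nat.prime_two.coprime_iff_not_dvd).mpr h2
    have e1 : Nat.gcd 2 (p ^ k) = 1 := c1
    have e2 : Nat.gcd 2 p = 1 := c2
    rw [Nat.gcd_comm (p ^ k) 2, Nat.gcd_comm p 2, e1, e2]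

lemma PP {p : ℕ} (hp : p.Prime) : ∀ k, ∀ m : ℤ,
    F (p ^ k) m ≤ Nat.gcd p 2 * 2 * p ^ (vmin p k m / 2) := by
  intro k
  induction k using Nat.strong_induction_on with
  | _ k IH =>
  intro m
  have hg1 : 1 ≤ Nat.gcd p 2 := Nat.gcd_pos_of_pos_right _ (by norm_num)
  have hpow1 : 1 ≤ p ^ (vmin p k m / 2) := Nat.one_le_pow _ _ hp.pos
  rcases Nat.eq_zero_or_pos k with rfl | hk
  · have hF : F (p ^ 0) m ≤ 1 := by
      rw [F]
      calc _ ≤ (Finset.range (p ^ 0)).card := Finset.card_filter_le _ _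
      _ = 1 := by simp
    nlinarith
  · by_cases hdvd : (p : ℤ) ∣ m
    · by_cases hdvd2 : (p : ℤ) ^ 2 ∣ m
      · rcases Nat.lt_or_ge k 2 with hk2 | hk2
        · have hk1 : k = 1 := by omega
          subst hk1
          have hF := PP_one hp hdvd
          nlinarith
        · have h1 := PP_rec hp hk2 hdvd2
          have h2 := IH (k - 2) (by omega) (m / (p : ℤ) ^ 2)
          have hvm := vmin_rec hp hk2 hdvd2
          calc F (p ^ k) m ≤ p * F (p ^ (k - 2)) (m / (p : ℤ) ^ 2) := h1
          _ ≤ p * (Nat.gcd p 2 * 2 * p ^ (vmin p (k - 2) (m / (p : ℤ) ^ 2) / 2)) :=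
              Nat.mul_le_mul_left _ h2
          _ = Nat.gcd p 2 * 2 * p ^ (vmin p k m / 2) := by rw [hvm, pow_succ]; ring
      · rcases Nat.lt_or_ge k 2 with hk2 | hk2
        · have hk1 : k = 1 := by omega
          subst hk1
          have hF := PP_one hp hdvd
          nlinarith
        · rw [PP_empty hp hk2 hdvd hdvd2]
          positivity
    · rcases eq_or_ne p 2 with rfl | hp2
      · rcases Nat.lt_or_ge k 2 with hk2 | hk2
        · have hk1 : k = 1 := by omega
          subst hk1
          have hF : F (2 ^ 1) m ≤ 2 := by
            rw [F]
            calc _ ≤ (Finset.range (2 ^ 1)).card := Finset.card_filter_le _ _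
            _ = 2 := by simp
          have : Nat.gcd 2 2 = 2 := Nat.gcd_self 2
          nlinarith
        · have hF := PP_unit_two hk2 hdvd
          have : Nat.gcd 2 2 = 2 := Nat.gcd_self 2
          nlinarith
      · have hF := PP_unit_odd hp hp2 hk hdvd
        nlinarith

lemma main_bound : ∀ q : ℕ, ∀ m : ℤ, 0 < q →
    F q m ≤ Nat.gcd q 2 * 2 ^ q.primeFactors.card * root (Nat.gcd q m.natAbs) := by
  intro q
  induction q using Nat.strong_induction_on with
  | _ q IH =>
  intro m hq
  rcases eq_or_ne q 1 with rfl | hq1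
  · have hF : F 1 m ≤ 1 := by
      rw [F]
      calc _ ≤ (Finset.range 1).card := Finset.card_filter_le _ _
      _ = 1 := by simp
    have : Nat.gcd 1 2 * 2 ^ (Nat.primeFactors 1).card * root (Nat.gcd 1 m.natAbs) = 1 := by
      simp [root]
    omega
  · have hp : q.minFac.Prime := Nat.minFac_prime hq1
    have hpd : q.minFac ∣ q := Nat.minFac_dvd q
    have hk1 : 1 ≤ q.factorization q.minFac := hp.factorization_pos_of_dvd hq.ne' hpd
    have ha0 : 0 < q.minFac ^ q.factorization q.minFac := pow_pos hp.pos _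
    have hab : q.minFac ^ q.factorization q.minFac ∣ q := Nat.ordProj_dvd q q.minFac
    have hqe : q = q.minFac ^ q.factorization q.minFac
        * (q / q.minFac ^ q.factorization q.minFac) := (Nat.mul_div_cancel' hab).symm
    have hb0 : 0 < q / q.minFac ^ q.factorization q.minFac :=
      Nat.div_pos (Nat.le_of_dvd hq hab) ha0
    have ha1 : 1 < q.minFac ^ q.factorization q.minFac := by
      calc 1 < q.minFac := hp.one_lt
      _ = q.minFac ^ 1 := (pow_one _).symm
      _ ≤ q.minFac ^ q.factorization q.minFac := Nat.pow_le_pow_right hp.pos hk1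
    have hblt : q / q.minFac ^ q.factorization q.minFac < q := Nat.div_lt_self hq ha1
    have hco : Nat.Coprime (q.minFac ^ q.factorization q.minFac)
        (q / q.minFac ^ q.factorization q.minFac) :=
      (Nat.coprime_ordCompl hp hq.ne').pow_left _
    have hFb := IH _ hblt m hb0
    have hpfa : (q.minFac ^ q.factorization q.minFac).primeFactors = {q.minFac} :=
      Nat.primeFactors_prime_pow (by omega) hp
    have hpfq : q.primeFactors.card
        = 1 + (q / q.minFac ^ q.factorization q.minFac).primeFactors.card := by
      conv_lhs => rw [hqe]
      rw [Nat.primeFactors_mul ha0.ne' hb0.ne',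
        Finset.card_union_of_disjoint hco.disjoint_primeFactors, hpfa]
      simp
    have hg2 : Nat.gcd q 2 = Nat.gcd (q.minFac ^ q.factorization q.minFac) 2
        * Nat.gcd (q / q.minFac ^ q.factorization q.minFac) 2 := by
      conv_lhs => rw [hqe]
      exact gcd_mul_coprime hco 2
    have hgm : Nat.gcd q m.natAbs = Nat.gcd (q.minFac ^ q.factorization q.minFac) m.natAbs
        * Nat.gcd (q / q.minFac ^ q.factorization q.minFac) m.natAbs := by
      conv_lhs => rw [hqe]
      exact gcd_mul_coprime hco _
    have hgco : Nat.Coprime (Nat.gcd (q.minFac ^ q.factorization q.minFac) m.natAbs)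
        (Nat.gcd (q / q.minFac ^ q.factorization q.minFac) m.natAbs) :=
      Nat.Coprime.coprime_dvd_left (Nat.gcd_dvd_left _ _)
        (Nat.Coprime.coprime_dvd_right (Nat.gcd_dvd_left _ _) hco)
    have hroot : root (Nat.gcd q m.natAbs)
        = root (Nat.gcd (q.minFac ^ q.factorization q.minFac) m.natAbs)
        * root (Nat.gcd (q / q.minFac ^ q.factorization q.minFac) m.natAbs) := by
      rw [hgm]
      exact root_mul_coprime (Nat.gcd_pos_of_pos_left _ ha0).ne'
        (Nat.gcd_pos_of_pos_left _ hb0).ne' hgco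
    have hra : root (Nat.gcd (q.minFac ^ q.factorization q.minFac) m.natAbs)
        = q.minFac ^ (vmin q.minFac (q.factorization q.minFac) m / 2) := by
      rw [gcd_pow_eq hp, root_prime_pow hp]
    have hFa' : F (q.minFac ^ q.factorization q.minFac) m
        ≤ Nat.gcd (q.minFac ^ q.factorization q.minFac) 2 * 2
          * root (Nat.gcd (q.minFac ^ q.factorization q.minFac) m.natAbs) := by
      rw [hra, gcd_pow_two hp hk1]
      exact PP hp _ m
    have hFq : F q m = F (q.minFac ^ q.factorization q.minFac) m
        * F (q / q.minFac ^ q.factorization q.minFac) m := by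
      conv_lhs => rw [hqe]
      exact F_mul ha0 hb0 hco m
    calc F q m = _ := hFq
    _ ≤ (Nat.gcd (q.minFac ^ q.factorization q.minFac) 2 * 2
          * root (Nat.gcd (q.minFac ^ q.factorization q.minFac) m.natAbs))
        * (Nat.gcd (q / q.minFac ^ q.factorization q.minFac) 2
          * 2 ^ (q / q.minFac ^ q.factorization q.minFac).primeFactors.card
          * root (Nat.gcd (q / q.minFac ^ q.factorization q.minFac) m.natAbs)) :=
        Nat.mul_le_mul hFa' hFb
    _ = Nat.gcd q 2 * 2 ^ q.primeFactors.card * root (Nat.gcd q m.natAbs) := by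
        rw [hg2, hroot, hpfq, pow_add, pow_one]
        ring

/-- η_q(m) ≤ gcd(q,2) · 2^{ω(q)} · √{q,m}, where {q,m} is the largest square dividing
gcd(q,m) (with gcd(q,0) = q). -/
theorem stmt2 (q : ℕ) (hq : 0 < q) (m : ℤ) :
    ((Finset.range q).filter (fun y : ℕ => ((y : ℤ) ^ 2) % (q : ℤ) = m % (q : ℤ))).card
      ≤ Nat.gcd q 2 * 2 ^ q.primeFactors.card * Nat.sqrt (sqPart (Nat.gcd q m.natAbs)) := by
  rw [sqrt_sqPart]
  exact main_bound q m hq
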